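/- Under the Barker hypotheses (with $n=2m+1$, $p\ge3$ the largest integer with $a_1=\cdots=a_p=1$, $a_{p+1}=-1$, and $s_{2k}=-1$ for $1\le k\le m-1$, $s_1=-1$, and relation (4) $a_ka_{k+1}=a_{2k}a_{2k+1}$), the power sums satisfy $s_\mu\equiv -1\pmod p$ for all $\mu=1,2,\ldots,2m-1-p$. -/

import Mathlib

open Finset Polynomial

theorem stmt14 (m p : ℕ) (hp : 3 ≤ p) (a : ℕ → ℤ)
    (ha : ∀ j ∈ Icc 1 (2 * m + 1), a j = 1 ∨ a j = -1)
    (hones : ∀ j, 1 ≤ j → j ≤ p → a j = 1) (hp1 : a (p + 1) = -1)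
    (α : Fin (2 * m) → ℂ)
    (hfact : (∑ j ∈ Icc 1 (2 * m + 1), C ((a j : ℂ)) * X ^ (2 * m + 1 - j)) =
      ∏ j, (X - C (α j)))
    (s : ℕ → ℤ) (hs : ∀ j, ((s j : ℂ)) = ∑ i, (α i) ^ j)
    (hs1 : s 1 = -1) (hs2 : ∀ k, 1 ≤ k → k ≤ m - 1 → s (2 * k) = -1)
    (hrel4 : ∀ k, 1 ≤ k → k ≤ m - 1 → a k * a (k + 1) = a (2 * k) * a (2 * k + 1)) :
    ∀ μ, 1 ≤ μ → μ ≤ 2 * m - 1 - p → (p : ℤ) ∣ s μ + 1 := by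
  intro μ hμ1 hμ2
  have hR : p + 2 ≤ 2 * m := by omega
  have hsign : ∀ j, 1 ≤ j → j ≤ 2*m+1 → a j = 1 ∨ a j = -1 :=
    fun j h1 h2 => ha j (Finset.mem_Icc.mpr ⟨h1, h2⟩)
  have ha1 : a 1 = 1 := hones 1 le_rfl (by omega)
  -- p is odd
  have hpodd : Odd p := by
    by_contra hev
    rw [Nat.not_odd_iff_even] at hev
    obtain ⟨k, hk⟩ := hev
    have h4 := hrel4 k (by omega) (by omega)
    rw [hones k (by omega) (by omega), hones (k+1) (by omega) (by omega),
        show 2*k = p by omega, hones p (by omega) le_rfl, hp1] at h4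
    norm_num at h4
  -- coefficients are elementary symmetric functions
  have hcard : Multiset.card (Multiset.map α Finset.univ.val) = 2*m := by simp
  have hcoeff : ∀ i, i ≤ 2*m →
      ((a (i+1) : ℂ)) = (-1)^i * (Multiset.map α Finset.univ.val).esymm i := by
    intro i hi
    have h1 := congrArg (fun q => Polynomial.coeff q (2*m - i)) hfact
    simp only [Polynomial.finset_sum_coeff, Polynomial.coeff_C_mul, Polynomial.coeff_X_pow] at h1
    rw [Finset.sum_eq_single (i+1)] at h1
    · rw [if_pos (by omega), mul_one] at h1
      have hprod : (∏ j : Fin (2*m), (X - Polynomial.C (α j))) =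
          (Multiset.map (fun t => Polynomial.X - Polynomial.C t)
            (Multiset.map α Finset.univ.val)).prod := by
        rw [Multiset.map_map]
        rfl
      rw [hprod, Multiset.prod_X_sub_C_coeff (s := Multiset.map α Finset.univ.val)
        (by rw [hcard]; omega), hcard, show 2*m - (2*m - i) = i by omega] at h1
      exact h1
    · intro j hj hne
      rw [if_neg, mul_zero]
      simp only [Finset.mem_Icc] at hj
      omega
    · intro h
      exact absurd (by simp [Finset.mem_Icc]; omega) h
  -- Newton's identity, evaluated at the roots
  have hNewt : ∀ k : ℕ, (k : ℂ) * (Multiset.map α Finset.univ.val).esymm k =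
      (-1)^(k+1) * ∑ x ∈ (Finset.HasAntidiagonal.antidiagonal k).filter (fun x => x.1 < k),
        (-1)^x.1 * (Multiset.map α Finset.univ.val).esymm x.1 * (∑ i, α i ^ x.2) := by
    intro k
    have h := congrArg (MvPolynomial.aeval α) (MvPolynomial.mul_esymm_eq_sum (Fin (2*m)) ℂ k)
    simpa only [map_mul, map_sum, map_pow, map_natCast, map_neg, map_one,
      MvPolynomial.aeval_esymm_eq_multiset_esymm, MvPolynomial.psum, MvPolynomial.aeval_X] using h
  -- integer Newton identities
  have hN : ∀ k, 1 ≤ k → k ≤ 2*m →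
      (∑ i ∈ range k, a (i+1) * s (k-i)) + (k:ℤ) * a (k+1) = 0 := by
    intro k hk1 hk2
    have h := hNewt k
    have hE : ∀ i, i ≤ 2*m →
        (Multiset.map α Finset.univ.val).esymm i = (-1)^i * ((a (i+1) : ℂ)) := by
      intro i hi
      rw [hcoeff i hi, ← mul_assoc, ← pow_add, Even.neg_one_pow ⟨i, by ring⟩, one_mul]
    rw [hE k hk2] at h
    rw [Finset.sum_congr rfl (fun x hx => by
      simp only [Finset.mem_filter, Finset.mem_antidiagonal] at hx
      rw [hE x.1 (by omega), ← mul_assoc, ← pow_add,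
        Even.neg_one_pow ⟨x.1, by ring⟩, one_mul])] at h
    rw [Finset.sum_filter, Finset.Nat.sum_antidiagonal_eq_sum_range_succ_mk,
      Finset.sum_range_succ, if_neg (lt_irrefl k)] at h
    rw [Finset.sum_congr rfl (fun i hi => if_pos (Finset.mem_range.mp hi))] at h
    simp only [← hs, add_zero] at h
    have hC : (∑ i ∈ range k, (a (i+1) : ℂ) * (s (k-i) : ℂ)) + (k:ℂ) * (a (k+1) : ℂ) = 0 := by
      rcases Nat.even_or_odd k with he | ho
      · rw [he.neg_one_pow, (he.add_one).neg_one_pow] at h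
        linear_combination h
      · rw [ho.neg_one_pow, (ho.add_one).neg_one_pow] at h
        linear_combination -h
    exact_mod_cast hC
  -- the difference identity
  have hDelta : ∀ n, 1 ≤ n → n + 1 ≤ 2*m →
      ∑ i ∈ range n, (a (i+2) - a (i+1)) * (s (n-i) + 1)
        = ((n:ℤ)+1) * (a (n+1) - a (n+2)) - (s (n+1) + 1) := by
    intro n hn1 hn2
    have h1 := hN (n+1) (by omega) hn2
    have h2 := hN n hn1 (by omega)
    rw [Finset.sum_range_succ'] at h1
    simp only [Nat.succ_sub_succ, Nat.sub_self, Nat.add_sub_cancel] at h1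
    have htel : ∑ i ∈ range n, (a (i+2) - a (i+1)) = a (n+1) - a 1 :=
      Finset.sum_range_sub (fun i => a (i+1)) n
    have hexp : ∀ i ∈ range n, (a (i+2) - a (i+1)) * (s (n-i) + 1)
        = (a (i+2) * s (n-i) - a (i+1) * s (n-i)) + (a (i+2) - a (i+1)) := by
      intro i _; ring
    rw [Finset.sum_congr rfl hexp, Finset.sum_add_distrib, Finset.sum_sub_distrib, htel, ha1]
    simp only [show ∀ x : ℕ, x + 1 + 1 = x + 2 from fun x => by omega] at h1
    rw [ha1, one_mul] at h1
    push_cast at h1 ⊢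
    linear_combination h1 - h2
  -- forcing equality of neighbors
  have hforce : ∀ ν, 1 ≤ ν → ν + 1 ≤ 2*m+1 → ¬ (p ∣ ν) →
      (p:ℤ) ∣ (ν:ℤ) * (a ν - a (ν+1)) → a ν = a (ν+1) := by
    intro ν h1 h2 hnd hdvd
    by_contra hne
    have hd : a ν - a (ν+1) = 2 ∨ a ν - a (ν+1) = -2 := by
      rcases hsign ν h1 (by omega) with hx|hx <;> rcases hsign (ν+1) (by omega) h2 with hy|hy <;>
        rw [hx, hy] at hne ⊢ <;> omega
    rcases hd with hd | hd <;> rw [hd] at hdvd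
    · have hn : (p:ℕ) ∣ ν * 2 := by exact_mod_cast hdvd
      exact hnd (Nat.Coprime.dvd_of_dvd_mul_right hpodd.coprime_two_right hn)
    · rw [mul_neg, dvd_neg] at hdvd
      have hn : (p:ℕ) ∣ ν * 2 := by exact_mod_cast hdvd
      exact hnd (Nat.Coprime.dvd_of_dvd_mul_right hpodd.coprime_two_right hn)
  have h2dvd : ∀ x : ℤ, (p:ℤ) ∣ 2*x → (p:ℤ) ∣ x := by
    intro x hx
    have hcop : IsCoprime (p:ℤ) 2 := by
      rw [Int.isCoprime_iff_gcd_eq_one]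
      have h22 : ((2:ℕ):ℤ) = (2:ℤ) := by norm_num
      rw [← h22, Int.gcd_natCast_natCast]
      exact hpodd.coprime_two_right
    exact hcop.dvd_of_dvd_mul_left hx
  -- the main induction
  have main : ∀ ν, 1 ≤ ν → ν ≤ 2*m - 1 - p →
      ((p:ℤ) ∣ s ν + 1) ∧ (¬ (p ∣ ν) → a ν = a (ν+1)) := by
    intro ν
    induction ν using Nat.strong_induction_on with
    | _ ν IH =>
    intro hν1 hν2
    have hkey : 2 ≤ ν → (p:ℤ) ∣ (ν:ℤ) * (a ν - a (ν+1)) - (s ν + 1) := by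
      intro h2ν
      have hD := hDelta (ν-1) (by omega) (by omega)
      rw [show ν-1+1 = ν by omega, show ν-1+2 = ν+1 by omega,
          show ((ν-1:ℕ):ℤ) + 1 = (ν:ℤ) by omega] at hD
      rw [← hD]
      apply Finset.dvd_sum
      intro i hi
      have hir := Finset.mem_range.mp hi
      exact Dvd.dvd.mul_left ((IH (ν-1-i) (by omega) (by omega) (by omega)).1) _
    have partA : (p:ℤ) ∣ s ν + 1 := by
      rcases Nat.even_or_odd ν with hev | hodd
      · obtain ⟨k, hk⟩ := hev
        have hsν : s ν = -1 := by
          have := hs2 k (by omega) (by omega)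
          rwa [show 2*k = ν by omega] at this
        rw [hsν]
        simp
      · rcases eq_or_lt_of_le hν1 with h1 | hν1'
        · rw [← h1, hs1]
          simp
        · by_cases hpν : p ∣ ν
          · have h1 : (p:ℤ) ∣ (ν:ℤ) * (a ν - a (ν+1)) :=
              Dvd.dvd.mul_right (Int.natCast_dvd_natCast.mpr hpν) _
            have := dvd_sub h1 (hkey (by omega))
            rwa [sub_sub_cancel] at this
          · by_cases hνp : ν < p
            · have e1 : a ν = 1 := hones ν hν1 (by omega)
              have e2 : a (ν+1) = 1 := hones (ν+1) (by omega) (by omega)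
              have hk := hkey (by omega)
              rw [e1, e2, sub_self, mul_zero, zero_sub] at hk
              exact dvd_neg.mp hk
            · -- main case: ν odd, p < ν, p ∤ ν
              have hνnep : ν ≠ p := fun h => hpν (h ▸ dvd_refl p)
              have hνgtp : p < ν := by omega
              obtain ⟨t, ht⟩ : Even (ν + p) := hodd.add_odd hpodd
              have hph : ¬ p ∣ t := by
                intro hd
                have hdd := Nat.dvd_sub (hd.add hd) (dvd_refl p)
                rw [show t + t - p = ν by omega] at hdd
                exact hpν hdd
              have hcht : a t = a (t+1) := by
                by_cases hsm : t + 1 ≤ p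
                · rw [hones t (by omega) (by omega), hones (t+1) (by omega) hsm]
                · have hne : t ≠ p := fun h => hph (h ▸ dvd_refl p)
                  exact (IH t (by omega) (by omega) (by omega)).2 hph
              have hMch : a (ν+p) = a (ν+p+1) := by
                have h4 := hrel4 t (by omega) (by omega)
                rw [← hcht] at h4
                have hsq : a t * a t = 1 := by
                  rcases hsign t (by omega) (by omega) with h|h <;> rw [h] <;> norm_num
                rw [hsq, show 2*t = ν + p by omega] at h4
                rcases hsign (ν+p) (by omega) (by omega) with h|h <;>
                  rcases hsign (ν+p+1) (by omega) (by omega) with h'|h' <;>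
                  rw [h, h'] at h4 ⊢ <;> omega
              have hsM : s (ν+p) = -1 := by
                have := hs2 t (by omega) (by omega)
                rwa [show 2*t = ν+p by omega] at this
              have hD := hDelta (ν+p-1) (by omega) (by omega)
              rw [show ν+p-1+1 = ν+p by omega, show ν+p-1+2 = ν+p+1 by omega, hsM, hMch] at hD
              have hD0 : ∑ i ∈ range (ν+p-1), (a (i+2) - a (i+1)) * (s (ν+p-1-i) + 1) = 0 := by
                rw [hD]; ring
              have hmem : p - 1 ∈ range (ν+p-1) := Finset.mem_range.mpr (by omega)
              have hsplit : (a (p-1+2) - a (p-1+1)) * (s (ν+p-1-(p-1)) + 1) +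
                  ∑ i ∈ (range (ν+p-1)).erase (p-1), (a (i+2) - a (i+1)) * (s (ν+p-1-i) + 1)
                  = ∑ i ∈ range (ν+p-1), (a (i+2) - a (i+1)) * (s (ν+p-1-i) + 1) :=
                Finset.add_sum_erase _ (fun i => (a (i+2) - a (i+1)) * (s (ν+p-1-i) + 1)) hmem
              have hterm : (a (p-1+2) - a (p-1+1)) * (s (ν+p-1-(p-1)) + 1) = -2 * (s ν + 1) := by
                rw [show p-1+2 = p+1 by omega, show p-1+1 = p by omega,
                  show ν+p-1-(p-1) = ν by omega, hp1, hones p (by omega) le_rfl]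
                ring
              have hdvderase : (p:ℤ) ∣ ∑ i ∈ (range (ν+p-1)).erase (p-1),
                  (a (i+2) - a (i+1)) * (s (ν+p-1-i) + 1) := by
                apply Finset.dvd_sum
                intro i hi
                obtain ⟨hne, hir⟩ := Finset.mem_erase.mp hi
                have hirange := Finset.mem_range.mp hir
                rcases Nat.lt_or_ge (i+1) p with hsmall | hbig
                · rw [hones (i+2) (by omega) (by omega), hones (i+1) (by omega) (by omega)]
                  simp
                · rcases Nat.even_or_odd (i+1) with hje | hjo
                  · obtain ⟨w, hw⟩ := hje
                    have hsv : s (ν+p-1-i) = -1 := by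
                      have := hs2 (t - w) (by omega) (by omega)
                      rwa [show 2*(t-w) = ν+p-1-i by omega] at this
                    rw [hsv]
                    simp
                  · obtain ⟨w1, hw1⟩ := hjo
                    obtain ⟨w2, hw2⟩ := hpodd
                    have hIH := (IH (ν+p-1-i) (by omega) (by omega) (by omega)).1
                    exact Dvd.dvd.mul_left hIH _
              have hfin : (p:ℤ) ∣ 2 * (s ν + 1) := by
                rw [hD0, hterm] at hsplit
                have heq : 2 * (s ν + 1) = ∑ i ∈ (range (ν+p-1)).erase (p-1),
                    (a (i+2) - a (i+1)) * (s (ν+p-1-i) + 1) := by linarith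
                rw [heq]
                exact hdvderase
              exact h2dvd _ hfin
    refine ⟨partA, ?_⟩
    intro hpν
    rcases eq_or_lt_of_le hν1 with h1 | hν1'
    · rw [← h1, ha1]
      exact (hones 2 (by omega) (by omega)).symm
    · have hk := hkey (by omega)
      have hdv := dvd_add hk partA
      rw [sub_add_cancel] at hdv
      exact hforce ν hν1 (by omega) hpν hdv
  exact (main μ hμ1 hμ2).1
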